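/- Let (X, π) be a link-connected weighted n-partite simplicial complex and let s = (s(1),…,s(n)) be any ordering of [n]. Then the second-largest singular value of the sequential sweep satisfies σ₂(Psq^{(s)})² ≤ 1 − ∏_{j=2}^{n} (1 − (ε^{s([j−1])→s(j)})²), where s([j−1]) = {s(1),…,s(j−1)}. Equivalently, Gap(Psq^{(s)}) = 1 − σ₂(Psq^{(s)}) ≥ 1 − √(1 − ∏_{j=2}^{n} (1 − (ε^{s([j−1])→s(j)})²)). -/

import Mathlib

open Finset
open scoped Classical

noncomputable section

namespace PaperFormal

/-- A weighted `n`-partite simplicial complex: a nonempty finite set `Ω` of `n`-tuples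
(the top faces, each tuple picking one element from each side `U i`) together with a
full-support probability distribution `π` on it. -/
structure WPC (n : ℕ) (U : Fin n → Type*) [∀ i, Fintype (U i)] [∀ i, DecidableEq (U i)] where
  Ω : Finset (∀ i, U i)
  nonempty : Ω.Nonempty
  π : (∀ i, U i) → ℝ
  nonneg : ∀ ω, 0 ≤ π ω
  support : ∀ ω, 0 < π ω ↔ ω ∈ Ω
  sum_one : ∑ ω : ∀ i, U i, π ω = 1

/-- Partial assignments to the coordinates in `S`. -/
abbrev PAssign {n : ℕ} (U : Fin n → Type*) (S : Finset (Fin n)) : Type _ :=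
  ∀ i : {x : Fin n // x ∈ S}, U i.1

variable {n : ℕ} {U : Fin n → Type*} [∀ i, Fintype (U i)] [∀ i, DecidableEq (U i)]

/-- Restriction of a tuple to the coordinates in `S`. -/
def restr (S : Finset (Fin n)) (ω : ∀ i, U i) : PAssign U S := fun i => ω i.1

/-- The unique assignment to the empty set of coordinates. -/
def emptyA : PAssign U (∅ : Finset (Fin n)) := fun i => absurd i.2 (Finset.notMem_empty i.1)

/-- Probability of the event `E` under `π`. -/
def pr (X : WPC n U) (E : (∀ i, U i) → Prop) : ℝ :=
  ∑ ω : ∀ i, U i, if E ω then X.π ω else 0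

lemma pr_congr (X : WPC n U) {E F : (∀ i, U i) → Prop} (h : ∀ ω, E ω ↔ F ω) :
    pr X E = pr X F :=
  Finset.sum_congr rfl fun ω _ => if_congr (h ω) rfl rfl

/-- The `S`-marginal of `π`, evaluated at the partial assignment `α`. -/
def marg (X : WPC n U) (S : Finset (Fin n)) (α : PAssign U S) : ℝ :=
  pr X fun ω => restr S ω = α

/-- The pinned marginal `π_T^{(α)}`: the probability that the coordinates in `T` agree
with `β`, conditioned on the coordinates in `S` agreeing with `α`. -/
def cmarg (X : WPC n U) {S T : Finset (Fin n)} (α : PAssign U S) (β : PAssign U T) : ℝ :=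
  pr X (fun ω => restr S ω = α ∧ restr T ω = β) / marg X S α

/-- The colored random walk `C_α^{I → J}`: entry `(τI, τJ)` is
`Pr[ω_J = τJ | ω_I = τI, ω_S = α]`. -/
def Cwalk (X : WPC n U) (S I J : Finset (Fin n)) (α : PAssign U S)
    (τI : PAssign U I) (τJ : PAssign U J) : ℝ :=
  pr X (fun ω => restr S ω = α ∧ restr I ω = τI ∧ restr J ω = τJ) /
    pr X (fun ω => restr S ω = α ∧ restr I ω = τI)

/-- The second largest singular value of a row-stochastic matrix `M` satisfying
`μA M = μB`, with respect to the inner products weighted by `μA` and `μB`, via its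
variational characterization
`σ₂(M) = sup { ⟨f, M g⟩_{μA} : ⟨f,1⟩_{μA} = ⟨g,1⟩_{μB} = 0, ‖f‖_{μA} = ‖g‖_{μB} = 1 }`. -/
def sigma2 {A B : Type*} [Fintype A] [Fintype B]
    (μA : A → ℝ) (μB : B → ℝ) (M : A → B → ℝ) : ℝ :=
  sSup { r : ℝ | ∃ f : A → ℝ, ∃ g : B → ℝ,
    (∑ a, μA a * f a) = 0 ∧ (∑ b, μB b * g b) = 0 ∧
    (∑ a, μA a * f a ^ 2) = 1 ∧ (∑ b, μB b * g b ^ 2) = 1 ∧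
    r = ∑ a, μA a * f a * ∑ b, M a b * g b }

/-- The second largest singular value `σ₂(C_α^{I → J})`, with respect to the inner
products weighted by the pinned marginals `π_I^{(α)}` and `π_J^{(α)}`. -/
def sigma2C (X : WPC n U) (S I J : Finset (Fin n)) (α : PAssign U S) : ℝ :=
  sigma2 (fun τI : PAssign U I => cmarg X α τI) (fun τJ : PAssign U J => cmarg X α τJ)
    (Cwalk X S I J α)

/-- `ε^{I → J}`: the maximum of `σ₂(C_α^{I → J})` over all partial assignments `α`
to the coordinates outside `I ∪ J` (realizable on `Ω`). -/
def epsIJ (X : WPC n U) (I J : Finset (Fin n)) : ℝ :=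
  sSup { r : ℝ | ∃ α : PAssign U (I ∪ J)ᶜ,
    0 < marg X (I ∪ J)ᶜ α ∧ r = sigma2C X (I ∪ J)ᶜ I J α }

/-- `π` is `(ε 0, …, ε (n-2))`-product: for every realizable pinning `α` of a set `S` of at
most `n - 2` coordinates, and all distinct `i, j ∉ S`, `σ₂(C_α^{i → j}) ≤ ε |S|`. -/
def isProduct (X : WPC n U) (ε : ℕ → ℝ) : Prop :=
  ∀ S : Finset (Fin n), S.card ≤ n - 2 → ∀ α : PAssign U S, 0 < marg X S α →
    ∀ i j : Fin n, i ∉ S → j ∉ S → i ≠ j → sigma2C X S {i} {j} α ≤ ε S.card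

/-- The update operator `Q_i`: resample the `i`-th coordinate according to `π`,
conditionally on all the other coordinates. -/
def Qmat (X : WPC n U) (i : Fin n) : Matrix (∀ i, U i) (∀ i, U i) ℝ :=
  Matrix.of fun ω ω' =>
    pr X (fun τ => τ = ω' ∧ restr {i}ᶜ τ = restr {i}ᶜ ω) /
      pr X (fun τ => restr {i}ᶜ τ = restr {i}ᶜ ω)

/-- The sequential sweep `P_seq^{(s)} = Q_{s 0} Q_{s 1} ⋯ Q_{s (n-1)}`. -/
def Psq (X : WPC n U) (s : Equiv.Perm (Fin n)) : Matrix (∀ i, U i) (∀ i, U i) ℝ :=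
  (List.ofFn fun j : Fin n => Qmat X (s j)).prod

/-- The second largest singular value of the sequential sweep, with respect to the
inner product weighted by its stationary distribution `π`. -/
def sigma2P (X : WPC n U) (s : Equiv.Perm (Fin n)) : ℝ :=
  sigma2 X.π X.π fun ω ω' => Psq X s ω ω'

/-- The link graph `G_α` of a pinning `α` of the coordinates in `S`: vertices are pairs
`(i, x)` with `i ∉ S`, and `(i,x)`, `(j,y)` are adjacent when `i ≠ j` and the event
`{ω_i = x, ω_j = y, ω_S = α}` has positive probability. -/
def linkGraph (X : WPC n U) (S : Finset (Fin n)) (α : PAssign U S) :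
    SimpleGraph ((i : Fin n) × U i) where
  Adj v w := v.1 ≠ w.1 ∧ v.1 ∉ S ∧ w.1 ∉ S ∧
    0 < pr X fun ω => restr S ω = α ∧ ω v.1 = v.2 ∧ ω w.1 = w.2
  symm := by
    constructor; rintro v w ⟨h1, h2, h3, h4⟩
    refine ⟨h1.symm, h3, h2, ?_⟩
    have e : pr X (fun ω => restr S ω = α ∧ ω w.1 = w.2 ∧ ω v.1 = v.2)
        = pr X (fun ω => restr S ω = α ∧ ω v.1 = v.2 ∧ ω w.1 = w.2) :=
      pr_congr X fun ω => by tauto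
    rw [e]; exact h4
  loopless := by constructor; rintro v ⟨h1, -⟩; exact h1 rfl

/-- `(X, π)` is link-connected: in every link graph (of a realizable pinning of at most
`n - 2` coordinates), every two valid vertices are connected by a path. -/
def linkConnected (X : WPC n U) : Prop :=
  ∀ S : Finset (Fin n), S.card ≤ n - 2 → ∀ α : PAssign U S, 0 < marg X S α →
    ∀ v w : (i : Fin n) × U i, v.1 ∉ S → w.1 ∉ S →
      0 < pr X (fun ω => restr S ω = α ∧ ω v.1 = v.2) →
      0 < pr X (fun ω => restr S ω = α ∧ ω w.1 = w.2) →
      (linkGraph X S α).Reachable v w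

/-- The stationary measure of the random walk on the link graph `G_α`. -/
def linkMeas (X : WPC n U) (S : Finset (Fin n)) (α : PAssign U S) :
    (i : Fin n) × U i → ℝ :=
  fun v => if v.1 ∈ S then 0 else
    (1 / ((n : ℝ) - (S.card : ℝ))) *
      (pr X (fun ω => restr S ω = α ∧ ω v.1 = v.2) / marg X S α)

/-- The random walk matrix `M_α` of the link graph `G_α`. -/
def linkWalk (X : WPC n U) (S : Finset (Fin n)) (α : PAssign U S) :
    (i : Fin n) × U i → (i : Fin n) × U i → ℝ :=
  fun v w =>
    if v.1 = w.1 ∨ v.1 ∈ S ∨ w.1 ∈ S then 0 else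
      (1 / ((n : ℝ) - (S.card : ℝ) - 1)) *
        (pr X (fun ω => restr S ω = α ∧ ω v.1 = v.2 ∧ ω w.1 = w.2) /
          pr X (fun ω => restr S ω = α ∧ ω v.1 = v.2))

/-- The second largest eigenvalue of a random walk matrix `M`, self-adjoint with respect
to the probability measure `μ`, via its variational characterization. -/
def lambda2 {A : Type*} [Fintype A] (μ : A → ℝ) (M : A → A → ℝ) : ℝ :=
  sSup { r : ℝ | ∃ f : A → ℝ,
    (∑ a, μ a * f a) = 0 ∧ (∑ a, μ a * f a ^ 2) = 1 ∧
    r = ∑ a, μ a * f a * ∑ b, M a b * f b }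

/-- `(X, π)` is a `(γ 0, …, γ (n-2))`-local spectral expander:
`λ₂(M_α) ≤ γ |S|` for every realizable pinning `α` of at most `n - 2` coordinates. -/
def isLocalExpander (X : WPC n U) (γ : ℕ → ℝ) : Prop :=
  ∀ S : Finset (Fin n), S.card ≤ n - 2 → ∀ α : PAssign U S, 0 < marg X S α →
    lambda2 (linkMeas X S α) (linkWalk X S α) ≤ γ S.card

/-- Kullback–Leibler divergence `D(μ ‖ ν) = Σ_a μ(a) log (μ(a) / ν(a))`. -/
def KL {A : Type*} [Fintype A] (μ ν : A → ℝ) : ℝ :=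
  ∑ a, μ a * Real.log (μ a / ν a)

/-- `μ` is a probability distribution supported on `{a | P a}`. -/
def distOn {A : Type*} [Fintype A] (P : A → Prop) (μ : A → ℝ) : Prop :=
  (∀ a, 0 ≤ μ a) ∧ (∑ a, μ a) = 1 ∧ ∀ a, ¬ P a → μ a = 0

/-- The `(I, J)` entropy contraction parameter `η^{I → J} = 1 - κ^{I → J}`, where
`κ^{I → J}` is the supremum of `D(μ C_α^{I→J} ‖ π_J^{(α)}) / D(μ ‖ π_I^{(α)})` over all
realizable pinnings `α` of the coordinates outside `I ∪ J` and all distributions `μ` on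
the assignments of `I` compatible with `α`. -/
def etaIJ (X : WPC n U) (I J : Finset (Fin n)) : ℝ :=
  1 - sSup { r : ℝ | ∃ α : PAssign U (I ∪ J)ᶜ, 0 < marg X (I ∪ J)ᶜ α ∧
    ∃ μ : PAssign U I → ℝ,
      distOn (fun τ => 0 < pr X fun ω => restr (I ∪ J)ᶜ ω = α ∧ restr I ω = τ) μ ∧
      KL μ (fun τ : PAssign U I => cmarg X α τ) ≠ 0 ∧
      r = KL (fun τJ : PAssign U J => ∑ τI : PAssign U I, μ τI * Cwalk X (I ∪ J)ᶜ I J α τI τJ)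
            (fun τJ : PAssign U J => cmarg X α τJ) /
          KL μ (fun τ : PAssign U I => cmarg X α τ) }

/-- The entropy contraction factor `EC(M) = 1 - sup_μ D(μ M ‖ π) / D(μ ‖ π)` of a random
walk matrix `M` with stationary distribution `π`. -/
def EC (X : WPC n U) (M : Matrix (∀ i, U i) (∀ i, U i) ℝ) : ℝ :=
  1 - sSup { r : ℝ | ∃ μ : (∀ i, U i) → ℝ, distOn (fun ω => ω ∈ X.Ω) μ ∧
    KL μ X.π ≠ 0 ∧ r = KL (Matrix.vecMul μ M) X.π / KL μ X.π }

/-- The `π`-weighted inner product on `ℝ^Ω`. -/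
def ip (X : WPC n U) (f g : {ω // ω ∈ X.Ω} → ℝ) : ℝ :=
  ∑ ω : {ω // ω ∈ X.Ω}, X.π ω.1 * f ω * g ω

/-- The indicator vector `u_α ∈ ℝ^Ω` of the partial assignment `α` to the coordinates
outside `T`. -/
def uvec (X : WPC n U) (T : Finset (Fin n)) (α : PAssign U Tᶜ) : {ω // ω ∈ X.Ω} → ℝ :=
  fun ω => if restr Tᶜ ω.1 = α then 1 else 0

/-- The subspace `U_T = span { u_α : α an assignment to the coordinates outside T }`. -/
def Uspan (X : WPC n U) (T : Finset (Fin n)) : Submodule ℝ ({ω // ω ∈ X.Ω} → ℝ) :=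
  Submodule.span ℝ { f | ∃ α : PAssign U Tᶜ, f = uvec X T α }

/-- The subspace of functions on `Ω` depending only on the coordinates outside `T`. -/
def Uinv (X : WPC n U) (T : Finset (Fin n)) : Submodule ℝ ({ω // ω ∈ X.Ω} → ℝ) where
  carrier := { f | ∀ ω ω' : {ω // ω ∈ X.Ω}, restr Tᶜ ω.1 = restr Tᶜ ω'.1 → f ω = f ω' }
  add_mem' := by
    intro f g hf hg ω ω' h
    simp only [Pi.add_apply, hf ω ω' h, hg ω ω' h]
  zero_mem' := by intro ω ω' h; rfl
  smul_mem' := by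
    intro c f hf ω ω' h
    simp only [Pi.smul_apply, hf ω ω' h]

/-- The orthogonal complement (with respect to `⟨·,·⟩_π`) of a subspace, as a set. -/
def orthC (X : WPC n U) (W : Submodule ℝ ({ω // ω ∈ X.Ω} → ℝ)) :
    Set ({ω // ω ∈ X.Ω} → ℝ) :=
  { f | ∀ g ∈ W, ip X f g = 0 }

/-- The cosine of the angle between two subspaces of `ℝ^Ω`:
`cos(A,B) = sup { ⟨u,v⟩_π : u ∈ A ∩ (A ⊓ B)ᗮ, v ∈ B ∩ (A ⊓ B)ᗮ, ‖u‖_π = ‖v‖_π = 1 }`. -/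
def cosAngle (X : WPC n U) (A B : Submodule ℝ ({ω // ω ∈ X.Ω} → ℝ)) : ℝ :=
  sSup { r : ℝ | ∃ u, u ∈ A ∧ u ∈ orthC X (A ⊓ B) ∧
    ∃ v, v ∈ B ∧ v ∈ orthC X (A ⊓ B) ∧
    ip X u u = 1 ∧ ip X v v = 1 ∧ r = ip X u v }

/-- The update operator `Q_i` as an operator on `ℝ^Ω`. -/
def Qop (X : WPC n U) (i : Fin n) (f : {ω // ω ∈ X.Ω} → ℝ) : {ω // ω ∈ X.Ω} → ℝ :=
  fun ω => ∑ ω' : {ω // ω ∈ X.Ω}, Qmat X i ω.1 ω'.1 * f ω'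

/-- Concatenation of partial assignments on disjoint coordinate sets. -/
def joinAssign {S T : Finset (Fin n)} (β : PAssign U S) (α : PAssign U T) :
    PAssign U (S ∪ T) :=
  fun i => if h : i.1 ∈ S then β ⟨i.1, h⟩
    else α ⟨i.1, (Finset.mem_union.mp i.2).resolve_left h⟩

/-- The `S`-marginal of a (not necessarily normalized) distribution `ν` on tuples. -/
def distMarg (ν : (∀ i, U i) → ℝ) (S : Finset (Fin n)) (a : PAssign U S) : ℝ :=
  ∑ ω : ∀ i, U i, if restr S ω = a then ν ω else 0

/-- The distribution `ν` conditioned on the `i`-th coordinate being `x`. -/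
def condAt (ν : (∀ i, U i) → ℝ) (i : Fin n) (x : U i) : (∀ i, U i) → ℝ :=
  fun ω => if ω i = x then ν ω / (∑ ω' : ∀ i, U i, if ω' i = x then ν ω' else 0) else 0

/-- The influence matrix `Inf_α` of the pinning `α` of the coordinates in `S`:
`Inf_α((i,x),(j,y)) = Pr[ω_j = y | ω_i = x, ω_S = α] - Pr[ω_j = y | ω_S = α]`
for `i ≠ j` outside `S`, and `0` otherwise. -/
def InfMat (X : WPC n U) (S : Finset (Fin n)) (α : PAssign U S) :
    Matrix ((i : Fin n) × U i) ((i : Fin n) × U i) ℝ :=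
  Matrix.of fun v w =>
    if v.1 = w.1 ∨ v.1 ∈ S ∨ w.1 ∈ S then 0 else
      pr X (fun ω => restr S ω = α ∧ ω v.1 = v.2 ∧ ω w.1 = w.2) /
          pr X (fun ω => restr S ω = α ∧ ω v.1 = v.2) -
        pr X (fun ω => restr S ω = α ∧ ω w.1 = w.2) / marg X S α

/-- `π` is `(c 0, …, c (n-2))`-spectrally independent: every (real) eigenvalue of the
influence matrix of a realizable pinning of at most `n - 2` coordinates is at most
`c |S|`. -/
def spectrallyIndependent (X : WPC n U) (c : ℕ → ℝ) : Prop :=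
  ∀ S : Finset (Fin n), S.card ≤ n - 2 → ∀ α : PAssign U S, 0 < marg X S α →
    ∀ r : ℝ,
      (∃ v : ((i : Fin n) × U i) → ℝ, v ≠ 0 ∧ (InfMat X S α).mulVec v = r • v) →
      r ≤ c S.card

end PaperFormal

namespace PaperFormal

variable {n : ℕ} {U : Fin n → Type*} [∀ i, Fintype (U i)] [∀ i, DecidableEq (U i)]

/-! ### Auxiliary development for STATEMENT 0 -/

set_option linter.unusedSectionVars false
set_option maxHeartbeats 1000000

/-- Indicator helper, decided classically (matching `pr`). -/
def ind (P : Prop) (x : ℝ) : ℝ := if P then x else 0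

section AuxBasic

lemma ind_pos {P : Prop} (h : P) (x : ℝ) : ind P x = x := if_pos h

lemma ind_neg {P : Prop} (h : ¬ P) (x : ℝ) : ind P x = 0 := if_neg h

lemma ind_nonneg {P : Prop} {x : ℝ} (hx : 0 ≤ x) : 0 ≤ ind P x := by
  unfold ind; split
  · exact hx
  · exact le_rfl

lemma ind_congr {P Q : Prop} (h : P ↔ Q) (x : ℝ) : ind P x = ind Q x := by
  by_cases hP : P
  · rw [ind_pos hP, ind_pos (h.mp hP)]
  · rw [ind_neg hP, ind_neg (fun hq => hP (h.mpr hq))]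

lemma ind_mul_right (P : Prop) (x y : ℝ) : ind P x * y = ind P (x * y) := by
  by_cases hP : P
  · rw [ind_pos hP, ind_pos hP]
  · rw [ind_neg hP, ind_neg hP, zero_mul]

lemma ind_mul_left (P : Prop) (x y : ℝ) : y * ind P x = ind P (y * x) := by
  rw [mul_comm, ind_mul_right, mul_comm]

lemma ind_div (P : Prop) (x y : ℝ) : ind P x / y = ind P (x / y) := by
  by_cases hP : P
  · rw [ind_pos hP, ind_pos hP]
  · rw [ind_neg hP, ind_neg hP, zero_div]

lemma ind_ind (P Q : Prop) (x : ℝ) : ind P (ind Q x) = ind (P ∧ Q) x := by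
  by_cases hP : P
  · rw [ind_pos hP]
    by_cases hQ : Q
    · rw [ind_pos hQ, ind_pos ⟨hP, hQ⟩]
    · rw [ind_neg hQ, ind_neg (fun h => hQ h.2)]
  · rw [ind_neg hP, ind_neg (fun h => hP h.1)]

lemma ind_zero (P : Prop) : ind P 0 = 0 := by
  by_cases hP : P
  · rw [ind_pos hP]
  · rw [ind_neg hP]

lemma pr_eq (X : WPC n U) (E : (∀ i, U i) → Prop) :
    pr X E = ∑ ω, ind (E ω) (X.π ω) := rfl

lemma pi_pos_of_ne {X : WPC n U} {ω : ∀ i, U i} (h : X.π ω ≠ 0) : 0 < X.π ω :=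
  lt_of_le_of_ne (X.nonneg ω) (Ne.symm h)

lemma pr_nonneg (X : WPC n U) (E : (∀ i, U i) → Prop) : 0 ≤ pr X E :=
  Finset.sum_nonneg fun ω _ => ind_nonneg (X.nonneg ω)

lemma pr_mono (X : WPC n U) {E F : (∀ i, U i) → Prop} (h : ∀ ω, E ω → F ω) :
    pr X E ≤ pr X F := by
  apply Finset.sum_le_sum
  intro ω _
  by_cases hE : E ω
  · rw [show (if E ω then X.π ω else 0) = ind (E ω) (X.π ω) from rfl,
        show (if F ω then X.π ω else 0) = ind (F ω) (X.π ω) from rfl,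
        ind_pos hE, ind_pos (h ω hE)]
  · rw [show (if E ω then X.π ω else 0) = ind (E ω) (X.π ω) from rfl, ind_neg hE]
    exact ind_nonneg (X.nonneg ω)

lemma pr_zero_of {X : WPC n U} {E : (∀ i, U i) → Prop} (hE : pr X E = 0)
    {F : (∀ i, U i) → Prop} (h : ∀ ω, F ω → E ω) : pr X F = 0 :=
  le_antisymm (hE ▸ pr_mono X h) (pr_nonneg X F)

/-- terms of a zero `pr` vanish -/
lemma pi_zero_of_pr {X : WPC n U} {E : (∀ i, U i) → Prop} (hE : pr X E = 0)
    {ω : ∀ i, U i} (hω : E ω) : X.π ω = 0 := by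
  have := (Finset.sum_eq_zero_iff_of_nonneg
      (fun τ _ => ind_nonneg (X.nonneg τ) (P := E τ))).mp hE ω (Finset.mem_univ ω)
  rwa [ind_pos hω] at this

/-- Weighted Cauchy–Schwarz. -/
lemma wcs {A : Type*} [Fintype A] (μ f g : A → ℝ) (hμ : ∀ a, 0 ≤ μ a) :
    (∑ a, μ a * f a * g a) ^ 2 ≤ (∑ a, μ a * f a ^ 2) * (∑ a, μ a * g a ^ 2) := by
  have h := Finset.sum_mul_sq_le_sq_mul_sq Finset.univ
      (fun a => Real.sqrt (μ a) * f a) (fun a => Real.sqrt (μ a) * g a)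
  have e1 : ∀ a : A, (Real.sqrt (μ a) * f a) * (Real.sqrt (μ a) * g a) = μ a * f a * g a := by
    intro a
    rw [show (Real.sqrt (μ a) * f a) * (Real.sqrt (μ a) * g a)
        = (Real.sqrt (μ a) * Real.sqrt (μ a)) * (f a * g a) by ring,
      Real.mul_self_sqrt (hμ a)]
    ring
  have e2 : ∀ (h : A → ℝ) (a : A), (Real.sqrt (μ a) * h a) ^ 2 = μ a * h a ^ 2 := by
    intro h a
    rw [mul_pow, Real.sq_sqrt (hμ a)]
  calc (∑ a, μ a * f a * g a) ^ 2
      = (∑ a, (Real.sqrt (μ a) * f a) * (Real.sqrt (μ a) * g a)) ^ 2 := by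
        congr 1; exact (Finset.sum_congr rfl fun a _ => (e1 a).symm)
    _ ≤ (∑ a, (Real.sqrt (μ a) * f a) ^ 2) * (∑ a, (Real.sqrt (μ a) * g a) ^ 2) := h
    _ = (∑ a, μ a * f a ^ 2) * (∑ a, μ a * g a ^ 2) := by
        congr 1 <;> exact Finset.sum_congr rfl fun a _ => e2 _ a

lemma sum_ind_eq {A : Type*} [Fintype A] (a : A) (x : ℝ) :
    ∑ c : A, ind (a = c) x = x := by
  rw [Fintype.sum_eq_single a (fun c hc => ind_neg (fun h => hc h.symm) x)]
  exact ind_pos rfl x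

/-- Partition of a sum over fibers of `restr T`. -/
lemma sum_fiber (T : Finset (Fin n)) (F : (∀ i, U i) → ℝ) :
    ∑ ω, F ω = ∑ c : PAssign U T, ∑ ω, ind (restr T ω = c) (F ω) := by
  rw [Finset.sum_comm]
  exact Finset.sum_congr rfl fun ω _ => (sum_ind_eq (restr T ω) (F ω)).symm

lemma pr_partition (X : WPC n U) (T : Finset (Fin n)) (E : (∀ i, U i) → Prop) :
    ∑ c : PAssign U T, pr X (fun ω => E ω ∧ restr T ω = c) = pr X E := by
  simp only [pr_eq]
  rw [Finset.sum_comm]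
  apply Finset.sum_congr rfl
  intro ω _
  rw [show (∑ c : PAssign U T, ind (E ω ∧ restr T ω = c) (X.π ω))
      = ∑ c : PAssign U T, ind (E ω) (ind (restr T ω = c) (X.π ω)) from
    Finset.sum_congr rfl fun c _ => by rw [ind_ind]]
  by_cases hE : E ω
  · rw [ind_pos hE]
    rw [show (∑ c : PAssign U T, ind (E ω) (ind (restr T ω = c) (X.π ω)))
        = ∑ c : PAssign U T, ind (restr T ω = c) (X.π ω) from
      Finset.sum_congr rfl fun c _ => ind_pos hE _]
    exact sum_ind_eq (restr T ω) (X.π ω)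
  · rw [ind_neg hE]
    rw [show (∑ c : PAssign U T, ind (E ω) (ind (restr T ω = c) (X.π ω)))
        = ∑ c : PAssign U T, (0:ℝ) from
      Finset.sum_congr rfl fun c _ => ind_neg hE _]
    exact Finset.sum_const_zero

end AuxBasic

/-! ### Weighted inner product and conditional expectation operators -/

/-- The `π`-weighted inner product on functions on tuples. -/
def din (X : WPC n U) (f g : (∀ i, U i) → ℝ) : ℝ := ∑ ω, X.π ω * f ω * g ω

/-- `π`-a.e. equality. -/
def aeq (X : WPC n U) (f g : (∀ i, U i) → ℝ) : Prop := ∀ ω, X.π ω ≠ 0 → f ω = g ω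

/-- Functions depending only on the coordinates outside `T`. -/
def Wdep (T : Finset (Fin n)) (f : (∀ i, U i) → ℝ) : Prop :=
  ∀ ω ω', restr Tᶜ ω = restr Tᶜ ω' → f ω = f ω'

/-- The resampling of the coordinates in `T` (conditional expectation given the rest). -/
def opT (X : WPC n U) (T : Finset (Fin n)) (f : (∀ i, U i) → ℝ) : (∀ i, U i) → ℝ :=
  fun ω => (∑ ω', ind (restr Tᶜ ω' = restr Tᶜ ω) (X.π ω' * f ω')) /
    pr X (fun τ => restr Tᶜ τ = restr Tᶜ ω)

section AuxOp

variable (X : WPC n U)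

lemma din_comm (f g : (∀ i, U i) → ℝ) : din X f g = din X g f :=
  Finset.sum_congr rfl fun ω _ => by ring

lemma din_self_nonneg (f : (∀ i, U i) → ℝ) : 0 ≤ din X f f :=
  Finset.sum_nonneg fun ω _ => by
    rw [mul_assoc]
    exact mul_nonneg (X.nonneg ω) (mul_self_nonneg _)

lemma din_add_right (f g h : (∀ i, U i) → ℝ) :
    din X f (g + h) = din X f g + din X f h := by
  unfold din
  rw [← Finset.sum_add_distrib]
  exact Finset.sum_congr rfl fun ω _ => by simp only [Pi.add_apply]; ring

lemma din_add_left (f g h : (∀ i, U i) → ℝ) :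
    din X (f + g) h = din X f h + din X g h := by
  rw [din_comm, din_add_right, din_comm X h f, din_comm X h g]

lemma din_cs (f g : (∀ i, U i) → ℝ) : (din X f g) ^ 2 ≤ din X f f * din X g g := by
  have h := wcs X.π f g X.nonneg
  unfold din
  calc (∑ ω, X.π ω * f ω * g ω) ^ 2 ≤ (∑ ω, X.π ω * f ω ^ 2) * (∑ ω, X.π ω * g ω ^ 2) := h
    _ = (∑ ω, X.π ω * f ω * f ω) * (∑ ω, X.π ω * g ω * g ω) := by
        congr 1 <;> exact Finset.sum_congr rfl fun ω _ => by ring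

lemma din_congr_right {g g' : (∀ i, U i) → ℝ} (f : (∀ i, U i) → ℝ) (h : aeq X g g') :
    din X f g = din X f g' := by
  apply Finset.sum_congr rfl
  intro ω _
  by_cases hπ : X.π ω = 0
  · rw [hπ]; ring
  · rw [h ω hπ]

lemma din_congr_left {f f' : (∀ i, U i) → ℝ} (h : aeq X f f') (g : (∀ i, U i) → ℝ) :
    din X f g = din X f' g := by
  rw [din_comm, din_congr_right X g h, din_comm]

lemma Wdep_mono {T T' : Finset (Fin n)} (hTT : T ⊆ T') {f : (∀ i, U i) → ℝ}
    (hf : Wdep T' f) : Wdep T f := by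
  intro ω ω' h
  apply hf
  funext k
  have hk : (k : Fin n) ∈ Tᶜ := by
    have := k.2
    simp only [Finset.mem_compl] at this ⊢
    exact fun hh => this (hTT hh)
  exact congrFun h ⟨k.1, hk⟩

lemma opT_mem (T : Finset (Fin n)) (f : (∀ i, U i) → ℝ) : Wdep T (opT X T f) := by
  intro ω ω' h
  unfold opT
  rw [h]

lemma opT_congr (T : Finset (Fin n)) {f g : (∀ i, U i) → ℝ} (h : aeq X f g) :
    opT X T f = opT X T g := by
  funext ω
  unfold opT
  rw [show (∑ ω', ind (restr Tᶜ ω' = restr Tᶜ ω) (X.π ω' * f ω'))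
      = ∑ ω', ind (restr Tᶜ ω' = restr Tᶜ ω) (X.π ω' * g ω') from
    Finset.sum_congr rfl fun ω' _ => by
      by_cases hπ : X.π ω' = 0
      · rw [hπ, zero_mul, zero_mul]
      · rw [h ω' hπ]]

lemma opT_fix (T : Finset (Fin n)) {f : (∀ i, U i) → ℝ} (hf : Wdep T f) :
    aeq X (opT X T f) f := by
  intro ω hπ
  have hD : 0 < pr X (fun τ => restr Tᶜ τ = restr Tᶜ ω) := by
    have h1 : X.π ω ≤ pr X (fun τ => restr Tᶜ τ = restr Tᶜ ω) := by
      rw [pr_eq]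
      have h2 := Finset.single_le_sum
        (f := fun τ => ind (restr Tᶜ τ = restr Tᶜ ω) (X.π τ))
        (fun τ _ => ind_nonneg (X.nonneg τ)) (Finset.mem_univ ω)
      simp only [] at h2
      rwa [ind_pos trivial] at h2
    exact lt_of_lt_of_le (pi_pos_of_ne hπ) h1
  have hnum : (∑ ω', ind (restr Tᶜ ω' = restr Tᶜ ω) (X.π ω' * f ω'))
      = f ω * pr X (fun τ => restr Tᶜ τ = restr Tᶜ ω) := by
    rw [pr_eq, Finset.mul_sum]
    apply Finset.sum_congr rfl
    intro ω' _
    by_cases hm : restr Tᶜ ω' = restr Tᶜ ω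
    · rw [ind_pos hm, ind_pos hm, hf ω' ω hm]; ring
    · rw [ind_neg hm, ind_neg hm, mul_zero]
  unfold opT
  rw [hnum, mul_div_assoc, div_self hD.ne', mul_one]

lemma opT_add (T : Finset (Fin n)) (f g : (∀ i, U i) → ℝ) :
    opT X T (f + g) = opT X T f + opT X T g := by
  funext ω
  simp only [opT, Pi.add_apply]
  rw [← add_div]
  congr 1
  rw [← Finset.sum_add_distrib]
  apply Finset.sum_congr rfl
  intro ω' _
  by_cases hm : restr Tᶜ ω' = restr Tᶜ ω
  · rw [ind_pos hm, ind_pos hm, ind_pos hm]; ring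
  · rw [ind_neg hm, ind_neg hm, ind_neg hm, add_zero]

/-- Self-adjointness of the conditional expectation. -/
lemma din_opT (T : Finset (Fin n)) (f g : (∀ i, U i) → ℝ) :
    din X (opT X T f) g = din X f (opT X T g) := by
  have key : ∀ f g : (∀ i, U i) → ℝ, din X (opT X T f) g =
      ∑ ω, ∑ ω', ind (restr Tᶜ ω' = restr Tᶜ ω)
        (X.π ω * X.π ω' * f ω' * g ω / pr X (fun τ => restr Tᶜ τ = restr Tᶜ ω)) := by
    intro f g
    unfold din opT
    apply Finset.sum_congr rfl
    intro ω _
    rw [show X.π ω * ((∑ ω', ind (restr Tᶜ ω' = restr Tᶜ ω) (X.π ω' * f ω')) /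
        pr X (fun τ => restr Tᶜ τ = restr Tᶜ ω)) * g ω
      = (∑ ω', ind (restr Tᶜ ω' = restr Tᶜ ω) (X.π ω' * f ω')) *
        (X.π ω * g ω / pr X (fun τ => restr Tᶜ τ = restr Tᶜ ω)) by ring,
      Finset.sum_mul]
    apply Finset.sum_congr rfl
    intro ω' _
    rw [ind_mul_right]
    exact congrArg (ind _) (by ring)
  rw [key f g, din_comm, key g f, Finset.sum_comm]
  apply Finset.sum_congr rfl
  intro ω _
  apply Finset.sum_congr rfl
  intro ω' _
  by_cases hm : restr Tᶜ ω' = restr Tᶜ ω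
  · have hD : pr X (fun τ => restr Tᶜ τ = restr Tᶜ ω') = pr X (fun τ => restr Tᶜ τ = restr Tᶜ ω) :=
      pr_congr X (fun τ => by rw [hm])
    rw [ind_pos hm, ind_pos hm.symm, hD]
    ring
  · rw [ind_neg hm, ind_neg (fun h => hm h.symm)]

/-- The conditional expectation is an `L²(π)` contraction. -/
lemma opT_contract (T : Finset (Fin n)) (f : (∀ i, U i) → ℝ) :
    din X (opT X T f) (opT X T f) ≤ din X f f := by
  set Qf := opT X T f with hQf
  have h1 : din X Qf Qf = din X f Qf := by
    rw [hQf, din_opT, din_congr_right X f (opT_fix X T (opT_mem X T f))]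
  have h2 : (din X f Qf) ^ 2 ≤ din X f f * din X Qf Qf := din_cs X f Qf
  rcases eq_or_lt_of_le (din_self_nonneg X Qf) with h0 | hpos
  · rw [← h0]; exact din_self_nonneg X f
  · have h3 : din X Qf Qf * din X Qf Qf ≤ din X f f * din X Qf Qf := by
      calc din X Qf Qf * din X Qf Qf = (din X f Qf)^2 := by rw [h1]; ring
        _ ≤ din X f f * din X Qf Qf := h2
    exact le_of_mul_le_mul_right h3 hpos

end AuxOp

/-! ### Generic facts about `sigma2` -/

/-- The set whose supremum defines `sigma2`. -/
def s2set {A B : Type*} [Fintype A] [Fintype B]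
    (μA : A → ℝ) (μB : B → ℝ) (M : A → B → ℝ) : Set ℝ :=
  { r : ℝ | ∃ f : A → ℝ, ∃ g : B → ℝ,
    (∑ a, μA a * f a) = 0 ∧ (∑ b, μB b * g b) = 0 ∧
    (∑ a, μA a * f a ^ 2) = 1 ∧ (∑ b, μB b * g b ^ 2) = 1 ∧
    r = ∑ a, μA a * f a * ∑ b, M a b * g b }

lemma sigma2_eq_sSup {A B : Type*} [Fintype A] [Fintype B]
    (μA : A → ℝ) (μB : B → ℝ) (M : A → B → ℝ) :
    sigma2 μA μB M = sSup (s2set μA μB M) := rfl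

section AuxSigma

variable {A B : Type*} [Fintype A] [Fintype B]
variable {μA : A → ℝ} {μB : B → ℝ} {M : A → B → ℝ}

lemma sum_mul_div {C : Type*} [Fintype C] (μ h : C → ℝ) (c : ℝ) :
    ∑ x, μ x * (h x / c) = (∑ x, μ x * h x) / c := by
  rw [Finset.sum_div]
  exact Finset.sum_congr rfl fun x _ => (mul_div_assoc _ _ _).symm

lemma exch (h : B → ℝ) :
    ∑ a, μA a * ∑ b, M a b * h b = ∑ b, (∑ a, μA a * M a b) * h b := by
  rw [show (∑ a, μA a * ∑ b, M a b * h b) = ∑ a, ∑ b, μA a * M a b * h b from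
    Finset.sum_congr rfl fun a _ => by
      rw [Finset.mul_sum]; exact Finset.sum_congr rfl fun b _ => by ring,
    Finset.sum_comm]
  exact Finset.sum_congr rfl fun b _ => (Finset.sum_mul _ _ _).symm

lemma op_bound (hA : ∀ a, 0 ≤ μA a) (hM : ∀ a b, 0 ≤ M a b)
    (hrow : ∀ a, μA a ≠ 0 → ∑ b, M a b ≤ 1)
    (hstat : ∀ b, ∑ a, μA a * M a b ≤ μB b) (g : B → ℝ) :
    ∑ a, μA a * (∑ b, M a b * g b) ^ 2 ≤ ∑ b, μB b * g b ^ 2 := by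
  have step1 : ∀ a, μA a * (∑ b, M a b * g b) ^ 2 ≤ μA a * ∑ b, M a b * g b ^ 2 := by
    intro a
    by_cases ha : μA a = 0
    · rw [ha, zero_mul, zero_mul]
    · apply mul_le_mul_of_nonneg_left _ (hA a)
      have hc := wcs (fun b => M a b) g (fun _ => 1) (hM a)
      simp only [mul_one, one_pow] at hc
      calc (∑ b, M a b * g b)^2 ≤ (∑ b, M a b * g b ^ 2) * (∑ b, M a b) := hc
        _ ≤ (∑ b, M a b * g b ^ 2) * 1 := by
            apply mul_le_mul_of_nonneg_left (hrow a ha)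
              (Finset.sum_nonneg fun b _ => mul_nonneg (hM a b) (sq_nonneg _))
        _ = ∑ b, M a b * g b ^ 2 := mul_one _
  calc ∑ a, μA a * (∑ b, M a b * g b) ^ 2 ≤ ∑ a, μA a * ∑ b, M a b * g b ^ 2 :=
        Finset.sum_le_sum fun a _ => step1 a
    _ = ∑ b, (∑ a, μA a * M a b) * g b ^ 2 := exch _
    _ ≤ ∑ b, μB b * g b ^ 2 :=
        Finset.sum_le_sum fun b _ => mul_le_mul_of_nonneg_right (hstat b) (sq_nonneg _)

lemma sigma2_val_le (hA : ∀ a, 0 ≤ μA a) (hM : ∀ a b, 0 ≤ M a b)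
    (hrow : ∀ a, μA a ≠ 0 → ∑ b, M a b ≤ 1)
    (hstat : ∀ b, ∑ a, μA a * M a b ≤ μB b)
    {f : A → ℝ} {g : B → ℝ} (hf2 : ∑ a, μA a * f a ^ 2 = 1)
    (hg2 : ∑ b, μB b * g b ^ 2 = 1) :
    |∑ a, μA a * f a * ∑ b, M a b * g b| ≤ 1 := by
  rw [← sq_le_one_iff_abs_le_one]
  calc (∑ a, μA a * f a * ∑ b, M a b * g b) ^ 2
      ≤ (∑ a, μA a * f a ^ 2) * (∑ a, μA a * (∑ b, M a b * g b) ^ 2) :=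
        wcs μA f (fun a => ∑ b, M a b * g b) hA
    _ = ∑ a, μA a * (∑ b, M a b * g b) ^ 2 := by rw [hf2, one_mul]
    _ ≤ ∑ b, μB b * g b ^ 2 := op_bound hA hM hrow hstat g
    _ = 1 := hg2

lemma s2set_bddAbove (hA : ∀ a, 0 ≤ μA a) (hM : ∀ a b, 0 ≤ M a b)
    (hrow : ∀ a, μA a ≠ 0 → ∑ b, M a b ≤ 1)
    (hstat : ∀ b, ∑ a, μA a * M a b ≤ μB b) :
    BddAbove (s2set μA μB M) := by
  refine ⟨1, ?_⟩
  rintro r ⟨f, g, h1, h2, h3, h4, rfl⟩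
  exact (abs_le.mp (sigma2_val_le hA hM hrow hstat h3 h4)).2

lemma sigma2_le_one (hA : ∀ a, 0 ≤ μA a) (hM : ∀ a b, 0 ≤ M a b)
    (hrow : ∀ a, μA a ≠ 0 → ∑ b, M a b ≤ 1)
    (hstat : ∀ b, ∑ a, μA a * M a b ≤ μB b) :
    sigma2 μA μB M ≤ 1 := by
  rw [sigma2_eq_sSup]
  apply Real.sSup_le _ zero_le_one
  rintro r ⟨f, g, h1, h2, h3, h4, rfl⟩
  exact (abs_le.mp (sigma2_val_le hA hM hrow hstat h3 h4)).2

lemma sigma2_nonneg (hA : ∀ a, 0 ≤ μA a) (hM : ∀ a b, 0 ≤ M a b)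
    (hrow : ∀ a, μA a ≠ 0 → ∑ b, M a b ≤ 1)
    (hstat : ∀ b, ∑ a, μA a * M a b ≤ μB b) :
    0 ≤ sigma2 μA μB M := by
  rw [sigma2_eq_sSup]
  rcases Set.eq_empty_or_nonempty (s2set μA μB M) with he | ⟨r, hr⟩
  · rw [he, Real.sSup_empty]
  · obtain ⟨f, g, h1, h2, h3, h4, h5⟩ := hr
    have hbdd := s2set_bddAbove hA hM hrow hstat
    have hmem : r ∈ s2set μA μB M := ⟨f, g, h1, h2, h3, h4, h5⟩
    have hneg : -r ∈ s2set μA μB M := by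
      refine ⟨fun a => -(f a), g, ?_, h2, ?_, h4, ?_⟩
      · rw [show (∑ a, μA a * -f a) = -∑ a, μA a * f a from by
          rw [← Finset.sum_neg_distrib]; exact Finset.sum_congr rfl fun a _ => by ring, h1,
          neg_zero]
      · rw [show (∑ a, μA a * (-f a) ^ 2) = ∑ a, μA a * f a ^ 2 from
          Finset.sum_congr rfl fun a _ => by ring]
        exact h3
      · rw [show (∑ a, μA a * -f a * ∑ b, M a b * g b)
            = -∑ a, μA a * f a * ∑ b, M a b * g b from by
          rw [← Finset.sum_neg_distrib]; exact Finset.sum_congr rfl fun a _ => by ring, ← h5]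
    have hr' := le_csSup hbdd hmem
    have hn' := le_csSup hbdd hneg
    linarith

lemma sigma2_contract (hA : ∀ a, 0 ≤ μA a) (hB : ∀ b, 0 ≤ μB b) (hM : ∀ a b, 0 ≤ M a b)
    (hrow : ∀ a, μA a ≠ 0 → ∑ b, M a b ≤ 1)
    (hstat' : ∀ b, ∑ a, μA a * M a b = μB b)
    (g : B → ℝ) (hg0 : ∑ b, μB b * g b = 0) :
    ∑ a, μA a * (∑ b, M a b * g b) ^ 2
      ≤ (sigma2 μA μB M) ^ 2 * ∑ b, μB b * g b ^ 2 := by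
  have hstat : ∀ b, ∑ a, μA a * M a b ≤ μB b := fun b => le_of_eq (hstat' b)
  have hG20 : 0 ≤ ∑ b, μB b * g b ^ 2 :=
    Finset.sum_nonneg fun b _ => mul_nonneg (hB b) (sq_nonneg _)
  have hL0 : 0 ≤ ∑ a, μA a * (∑ b, M a b * g b) ^ 2 :=
    Finset.sum_nonneg fun a _ => mul_nonneg (hA a) (sq_nonneg _)
  have hLG : ∑ a, μA a * (∑ b, M a b * g b) ^ 2 ≤ ∑ b, μB b * g b ^ 2 :=
    op_bound hA hM hrow hstat g
  have hmean : ∑ a, μA a * ∑ b, M a b * g b = 0 := by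
    rw [exch g, show (∑ b, (∑ a, μA a * M a b) * g b) = ∑ b, μB b * g b from
      Finset.sum_congr rfl fun b _ => by rw [hstat' b]]
    exact hg0
  rcases eq_or_lt_of_le hL0 with h0 | hLpos
  · rw [← h0]
    exact mul_nonneg (sq_nonneg _) hG20
  · have hG2pos : 0 < ∑ b, μB b * g b ^ 2 := lt_of_lt_of_le hLpos hLG
    set L := ∑ a, μA a * (∑ b, M a b * g b) ^ 2 with hLdef
    set G2 := ∑ b, μB b * g b ^ 2 with hG2def
    set P := Real.sqrt L with hPdef
    set G := Real.sqrt G2 with hGdef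
    have hPpos : 0 < P := Real.sqrt_pos.mpr hLpos
    have hGpos : 0 < G := Real.sqrt_pos.mpr hG2pos
    have hP2 : P ^ 2 = L := Real.sq_sqrt hL0
    have hG2' : G ^ 2 = G2 := Real.sq_sqrt hG20
    have hmem : P / G ∈ s2set μA μB M := by
      refine ⟨fun a => (∑ b, M a b * g b) / P, fun b => g b / G, ?_, ?_, ?_, ?_, ?_⟩
      · rw [sum_mul_div μA (fun a => ∑ b, M a b * g b) P, hmean, zero_div]
      · rw [sum_mul_div μB g G, hg0, zero_div]
      · rw [show (∑ a, μA a * ((∑ b, M a b * g b) / P) ^ 2)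
            = ∑ a, μA a * ((∑ b, M a b * g b) ^ 2 / P ^ 2) from
          Finset.sum_congr rfl fun a _ => by rw [div_pow],
          sum_mul_div μA (fun a => (∑ b, M a b * g b) ^ 2) (P ^ 2), hP2, ← hLdef]
        exact div_self hLpos.ne'
      · rw [show (∑ b, μB b * (g b / G) ^ 2) = ∑ b, μB b * (g b ^ 2 / G ^ 2) from
          Finset.sum_congr rfl fun b _ => by rw [div_pow],
          sum_mul_div μB (fun b => g b ^ 2) (G ^ 2), hG2', ← hG2def]
        exact div_self hG2pos.ne'
      · rw [show (∑ a, μA a * ((∑ b, M a b * g b) / P) * ∑ b, M a b * (g b / G))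
            = ∑ a, μA a * ((∑ b, M a b * g b) ^ 2 / (P * G)) from
          Finset.sum_congr rfl fun a _ => by
            rw [sum_mul_div (fun b => M a b) g G]; ring,
          sum_mul_div μA (fun a => (∑ b, M a b * g b) ^ 2) (P * G), ← hLdef, ← hP2, pow_two,
          mul_div_mul_left _ _ hPpos.ne']
    have hbdd := s2set_bddAbove hA hM hrow hstat
    have hle : P / G ≤ sigma2 μA μB M := by
      rw [sigma2_eq_sSup]
      exact le_csSup hbdd hmem
    have hPle : P ≤ sigma2 μA μB M * G := (div_le_iff₀ hGpos).mp hle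
    calc L = P ^ 2 := hP2.symm
      _ ≤ (sigma2 μA μB M * G) ^ 2 := pow_le_pow_left₀ hPpos.le hPle 2
      _ = (sigma2 μA μB M) ^ 2 * G2 := by rw [mul_pow, hG2']

end AuxSigma

/-! ### Facts about the colored walk and `epsIJ` -/

section AuxCwalk

variable (X : WPC n U)

lemma ind_congr_payload {P : Prop} {x y : ℝ} (h : P → x = y) : ind P x = ind P y := by
  by_cases hP : P
  · rw [ind_pos hP, ind_pos hP, h hP]
  · rw [ind_neg hP, ind_neg hP]

lemma marg_nonneg (S : Finset (Fin n)) (α : PAssign U S) : 0 ≤ marg X S α :=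
  pr_nonneg X _

lemma cmarg_nonneg {S T : Finset (Fin n)} (α : PAssign U S) (β : PAssign U T) :
    0 ≤ cmarg X α β :=
  div_nonneg (pr_nonneg X _) (pr_nonneg X _)

lemma Cwalk_nonneg (S I J : Finset (Fin n)) (α : PAssign U S)
    (τI : PAssign U I) (τJ : PAssign U J) : 0 ≤ Cwalk X S I J α τI τJ :=
  div_nonneg (pr_nonneg X _) (pr_nonneg X _)

lemma cmarg_ne_zero_imp {S T : Finset (Fin n)} {α : PAssign U S} {β : PAssign U T}
    (h : cmarg X α β ≠ 0) :
    pr X (fun ω => restr S ω = α ∧ restr T ω = β) ≠ 0 := by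
  intro h0
  exact h (by unfold cmarg; rw [h0, zero_div])

lemma Cwalk_rowsum (S I J : Finset (Fin n)) (α : PAssign U S) (τI : PAssign U I)
    (h : pr X (fun ω => restr S ω = α ∧ restr I ω = τI) ≠ 0) :
    ∑ τJ, Cwalk X S I J α τI τJ = 1 := by
  unfold Cwalk
  rw [← Finset.sum_div]
  rw [show (∑ τJ : PAssign U J, pr X (fun ω => restr S ω = α ∧ restr I ω = τI ∧ restr J ω = τJ))
      = pr X (fun ω => restr S ω = α ∧ restr I ω = τI) from ?_]
  · exact div_self h
  · rw [← pr_partition X J (fun ω => restr S ω = α ∧ restr I ω = τI)]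
    exact Finset.sum_congr rfl fun τJ _ => pr_congr X fun ω => and_assoc.symm

lemma Cwalk_stat (S I J : Finset (Fin n)) (α : PAssign U S) (hα : marg X S α ≠ 0)
    (τJ : PAssign U J) :
    ∑ τI, cmarg X α τI * Cwalk X S I J α τI τJ = cmarg X α τJ := by
  have hterm : ∀ τI : PAssign U I, cmarg X α τI * Cwalk X S I J α τI τJ
      = pr X (fun ω => restr S ω = α ∧ restr I ω = τI ∧ restr J ω = τJ) / marg X S α := by
    intro τI
    unfold cmarg Cwalk
    by_cases hp : pr X (fun ω => restr S ω = α ∧ restr I ω = τI) = 0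
    · have hq : pr X (fun ω => restr S ω = α ∧ restr I ω = τI ∧ restr J ω = τJ) = 0 :=
        le_antisymm (hp ▸ pr_mono X (fun ω h => ⟨h.1, h.2.1⟩)) (pr_nonneg X _)
      rw [hp, hq, zero_div, zero_div, mul_zero]
    · rw [div_mul_div_comm, mul_comm (marg X S α) _, mul_div_mul_left _ _ hp]
  rw [Finset.sum_congr rfl fun τI _ => hterm τI, ← Finset.sum_div]
  unfold cmarg
  congr 1
  rw [← pr_partition X I (fun ω => restr S ω = α ∧ restr J ω = τJ)]
  exact Finset.sum_congr rfl fun τI _ => pr_congr X fun ω => by tauto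

lemma sigma2C_le_one {S I J : Finset (Fin n)} {α : PAssign U S} (hα : marg X S α ≠ 0) :
    sigma2C X S I J α ≤ 1 := by
  unfold sigma2C
  apply sigma2_le_one (fun τ => cmarg_nonneg X α τ) (fun τI τJ => Cwalk_nonneg X S I J α τI τJ)
  · intro τI hτ
    exact le_of_eq (Cwalk_rowsum X S I J α τI (cmarg_ne_zero_imp X hτ))
  · exact fun τJ => le_of_eq (Cwalk_stat X S I J α hα τJ)

lemma sigma2C_nonneg {S I J : Finset (Fin n)} {α : PAssign U S} (hα : marg X S α ≠ 0) :
    0 ≤ sigma2C X S I J α := by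
  unfold sigma2C
  apply sigma2_nonneg (fun τ => cmarg_nonneg X α τ) (fun τI τJ => Cwalk_nonneg X S I J α τI τJ)
  · intro τI hτ
    exact le_of_eq (Cwalk_rowsum X S I J α τI (cmarg_ne_zero_imp X hτ))
  · exact fun τJ => le_of_eq (Cwalk_stat X S I J α hα τJ)

lemma epsIJ_nonneg (I J : Finset (Fin n)) : 0 ≤ epsIJ X I J := by
  apply Real.sSup_nonneg
  rintro r ⟨α, hα, rfl⟩
  exact sigma2C_nonneg X hα.ne'

lemma epsIJ_le_one (I J : Finset (Fin n)) : epsIJ X I J ≤ 1 := by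
  apply Real.sSup_le _ zero_le_one
  rintro r ⟨α, hα, rfl⟩
  exact sigma2C_le_one X hα.ne'

lemma sigma2C_le_epsIJ {I J : Finset (Fin n)} {α : PAssign U (I ∪ J)ᶜ}
    (hα : 0 < marg X (I ∪ J)ᶜ α) : sigma2C X (I ∪ J)ᶜ I J α ≤ epsIJ X I J := by
  apply le_csSup
  · refine ⟨1, ?_⟩
    rintro r ⟨α', hα', rfl⟩
    exact sigma2C_le_one X hα'.ne'
  · exact ⟨α, hα, rfl⟩

end AuxCwalk

/-! ### The key one-step contraction lemma -/

section AuxStar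

variable (X : WPC n U)

/-- Fibered rewriting of a block sum. -/
lemma habstract (E : (∀ i, U i) → Prop) (T' : Finset (Fin n)) (v : (∀ i, U i) → ℝ)
    (w : PAssign U T' → ℝ) (hvw : ∀ ω, E ω → v ω = w (restr T' ω)) :
    ∑ ω, ind (E ω) (X.π ω * v ω)
      = ∑ c, pr X (fun ω => E ω ∧ restr T' ω = c) * w c := by
  rw [sum_fiber T' (fun ω => ind (E ω) (X.π ω * v ω))]
  apply Finset.sum_congr rfl
  intro c _
  rw [pr_eq, Finset.sum_mul]
  apply Finset.sum_congr rfl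
  intro ω _
  rw [ind_ind, ind_mul_right,
    ind_congr (show ((restr T' ω = c) ∧ E ω) ↔ (E ω ∧ restr T' ω = c) from and_comm)]
  apply ind_congr_payload
  rintro ⟨hE, hc⟩
  rw [hvw ω hE, hc]

lemma star_block {I : Finset (Fin n)} {i : Fin n} (hi : i ∉ I) {u : (∀ i, U i) → ℝ}
    (hu : Wdep I u) (α : PAssign U (I ∪ {i})ᶜ) (hα : 0 < marg X (I ∪ {i})ᶜ α)
    (hmean : ∑ ω, ind (restr (I ∪ {i})ᶜ ω = α) (X.π ω * u ω) = 0) :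
    ∑ ω, ind (restr (I ∪ {i})ᶜ ω = α) (X.π ω * (opT X {i} u ω) ^ 2)
      ≤ (epsIJ X I {i}) ^ 2 *
        ∑ ω, ind (restr (I ∪ {i})ᶜ ω = α) (X.π ω * (u ω) ^ 2) := by
  obtain ⟨ω₀, -⟩ := X.nonempty
  set g : PAssign U ({i} : Finset (Fin n)) → ℝ := fun τ =>
    u (fun k => if h : k ∈ (I ∪ {i})ᶜ then α ⟨k, h⟩ else
        if h2 : k ∈ ({i} : Finset (Fin n)) then τ ⟨k, h2⟩ else ω₀ k) with hgdef
  have hiS : i ∉ (I ∪ {i})ᶜ := by simp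
  have hknotmem : ∀ k : Fin n, k ∉ (I ∪ {i})ᶜ → k ∉ ({i} : Finset (Fin n)) → k ∈ I := by
    intro k hkS hki
    have h1 : k ∈ I ∪ {i} := by
      by_contra hmem
      exact hkS (Finset.mem_compl.mpr hmem)
    rcases Finset.mem_union.mp h1 with h | h
    · exact h
    · exact absurd h hki
  have key_u : ∀ ω, restr (I ∪ {i})ᶜ ω = α → u ω = g (restr {i} ω) := by
    intro ω hω
    simp only [hgdef]
    apply hu
    funext k
    rcases k with ⟨k, hk⟩
    simp only [restr]
    by_cases hkS : k ∈ (I ∪ {i})ᶜ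
    · rw [dif_pos hkS]
      exact congrFun hω ⟨k, hkS⟩
    · by_cases hki : k ∈ ({i} : Finset (Fin n))
      · rw [dif_neg hkS, dif_pos hki]
      · exact absurd (hknotmem k hkS hki) (Finset.mem_compl.mp hk)
  have hQω : ∀ ω, restr (I ∪ {i})ᶜ ω = α →
      opT X {i} u ω = ∑ τJ, Cwalk X (I ∪ {i})ᶜ I {i} α (restr I ω) τJ * g τJ := by
    intro ω hω
    have Ev : ∀ ω', (restr ({i} : Finset (Fin n))ᶜ ω' = restr ({i} : Finset (Fin n))ᶜ ω)
        ↔ (restr (I ∪ {i})ᶜ ω' = α ∧ restr I ω' = restr I ω) := by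
      intro ω'
      constructor
      · intro hm
        have hpt : ∀ k : Fin n, k ≠ i → ω' k = ω k := by
          intro k hk
          exact congrFun hm ⟨k, by simp [hk]⟩
        constructor
        · funext k
          rcases k with ⟨k, hkS⟩
          have hki : k ≠ i := fun h => hiS (h ▸ hkS)
          show ω' k = α ⟨k, hkS⟩
          rw [hpt k hki]
          exact congrFun hω ⟨k, hkS⟩
        · funext k
          rcases k with ⟨k, hkI⟩
          have hki : k ≠ i := fun h => hi (h ▸ hkI)
          exact hpt k hki
      · rintro ⟨h1, h2⟩
        funext k
        rcases k with ⟨k, hk⟩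
        have hki : k ≠ i := by simpa using hk
        by_cases hkS : k ∈ (I ∪ {i})ᶜ
        · show ω' k = ω k
          have e1 := congrFun h1 ⟨k, hkS⟩
          have e2 := congrFun hω ⟨k, hkS⟩
          exact e1.trans e2.symm
        · by_cases hkI : k ∈ I
          · exact congrFun h2 ⟨k, hkI⟩
          · exact absurd (hknotmem k hkS (by simp [hki])) hkI
    unfold opT
    rw [show pr X (fun τ => restr ({i} : Finset (Fin n))ᶜ τ = restr ({i} : Finset (Fin n))ᶜ ω)
        = pr X (fun ω' => restr (I ∪ {i})ᶜ ω' = α ∧ restr I ω' = restr I ω) from pr_congr X Ev]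
    rw [show (∑ ω', ind (restr ({i} : Finset (Fin n))ᶜ ω' = restr ({i} : Finset (Fin n))ᶜ ω)
          (X.π ω' * u ω'))
        = ∑ τJ, pr X (fun ω' => (restr (I ∪ {i})ᶜ ω' = α ∧ restr I ω' = restr I ω)
            ∧ restr {i} ω' = τJ) * g τJ from ?_]
    · rw [Finset.sum_div]
      apply Finset.sum_congr rfl
      intro τJ _
      rw [show pr X (fun ω' => (restr (I ∪ {i})ᶜ ω' = α ∧ restr I ω' = restr I ω) ∧ restr {i} ω' = τJ)
          = pr X (fun ω' => restr (I ∪ {i})ᶜ ω' = α ∧ restr I ω' = restr I ω ∧ restr {i} ω' = τJ) from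
        pr_congr X fun ω' => and_assoc]
      unfold Cwalk
      rw [div_mul_eq_mul_div]
    · rw [Finset.sum_congr rfl fun ω' _ => ind_congr (Ev ω') (X.π ω' * u ω')]
      exact habstract X _ {i} u g (fun ω' h => key_u ω' h.1)
  have tr_mean : ∑ τJ, pr X (fun ω => restr (I ∪ {i})ᶜ ω = α ∧ restr {i} ω = τJ) * g τJ = 0 := by
    rw [← habstract X (fun ω => restr (I ∪ {i})ᶜ ω = α) {i} u g (fun ω h => key_u ω h)]
    exact hmean
  have tr_R : ∑ ω, ind (restr (I ∪ {i})ᶜ ω = α) (X.π ω * (u ω) ^ 2)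
      = ∑ τJ, pr X (fun ω => restr (I ∪ {i})ᶜ ω = α ∧ restr {i} ω = τJ) * (g τJ) ^ 2 :=
    habstract X _ {i} (fun ω => (u ω) ^ 2) (fun τ => (g τ) ^ 2)
      (fun ω h => congrArg (· ^ 2) (key_u ω h))
  have tr_L : ∑ ω, ind (restr (I ∪ {i})ᶜ ω = α) (X.π ω * (opT X {i} u ω) ^ 2)
      = ∑ τI, pr X (fun ω => restr (I ∪ {i})ᶜ ω = α ∧ restr I ω = τI) *
          (∑ τJ, Cwalk X (I ∪ {i})ᶜ I {i} α τI τJ * g τJ) ^ 2 :=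
    habstract X _ I (fun ω => (opT X {i} u ω) ^ 2)
      (fun τI => (∑ τJ, Cwalk X (I ∪ {i})ᶜ I {i} α τI τJ * g τJ) ^ 2)
      (fun ω h => congrArg (· ^ 2) (hQω ω h))
  have hconv : ∀ (T' : Finset (Fin n)) (τ : PAssign U T') (y : ℝ),
      pr X (fun ω => restr (I ∪ {i})ᶜ ω = α ∧ restr T' ω = τ) * y
        = marg X (I ∪ {i})ᶜ α * (cmarg X α τ * y) := by
    intro T' τ y
    unfold cmarg
    field_simp
  have hg0 : ∑ τJ : PAssign U ({i} : Finset (Fin n)), cmarg X α τJ * g τJ = 0 := by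
    have hterm : ∀ τJ : PAssign U ({i} : Finset (Fin n)), cmarg X α τJ * g τJ
        = pr X (fun ω => restr (I ∪ {i})ᶜ ω = α ∧ restr {i} ω = τJ) * g τJ / marg X (I ∪ {i})ᶜ α := by
      intro τJ
      unfold cmarg
      rw [div_mul_eq_mul_div]
    rw [Finset.sum_congr rfl fun τJ _ => hterm τJ, ← Finset.sum_div, tr_mean, zero_div]
  have hGL := sigma2_contract (μA := fun τI : PAssign U I => cmarg X α τI)
      (μB := fun τJ : PAssign U ({i} : Finset (Fin n)) => cmarg X α τJ)
      (M := Cwalk X (I ∪ {i})ᶜ I {i} α)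
      (fun τ => cmarg_nonneg X α τ) (fun τ => cmarg_nonneg X α τ)
      (fun τI τJ => Cwalk_nonneg X (I ∪ {i})ᶜ I {i} α τI τJ)
      (fun τI hτ => le_of_eq (Cwalk_rowsum X (I ∪ {i})ᶜ I {i} α τI (cmarg_ne_zero_imp X hτ)))
      (fun τJ => Cwalk_stat X (I ∪ {i})ᶜ I {i} α hα.ne' τJ) g hg0
  have hs2C : sigma2 (fun τI : PAssign U I => cmarg X α τI)
      (fun τJ : PAssign U ({i} : Finset (Fin n)) => cmarg X α τJ)
      (Cwalk X (I ∪ {i})ᶜ I {i} α) = sigma2C X (I ∪ {i})ᶜ I {i} α := rfl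
  rw [hs2C] at hGL
  have hεsq : (sigma2C X (I ∪ {i})ᶜ I {i} α) ^ 2 ≤ (epsIJ X I {i}) ^ 2 :=
    pow_le_pow_left₀ (sigma2C_nonneg X hα.ne') (sigma2C_le_epsIJ X hα) 2
  have hBnonneg : 0 ≤ ∑ τJ : PAssign U ({i} : Finset (Fin n)), cmarg X α τJ * (g τJ) ^ 2 :=
    Finset.sum_nonneg fun τJ _ => mul_nonneg (cmarg_nonneg X α τJ) (sq_nonneg _)
  calc ∑ ω, ind (restr (I ∪ {i})ᶜ ω = α) (X.π ω * (opT X {i} u ω) ^ 2)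
      = marg X (I ∪ {i})ᶜ α * ∑ τI, cmarg X α τI * (∑ τJ, Cwalk X (I ∪ {i})ᶜ I {i} α τI τJ * g τJ) ^ 2 := by
        rw [tr_L, Finset.mul_sum]
        exact Finset.sum_congr rfl fun τI _ => hconv I τI _
    _ ≤ marg X (I ∪ {i})ᶜ α * ((sigma2C X (I ∪ {i})ᶜ I {i} α) ^ 2 *
          ∑ τJ, cmarg X α τJ * (g τJ) ^ 2) :=
        mul_le_mul_of_nonneg_left hGL (le_of_lt hα)
    _ ≤ marg X (I ∪ {i})ᶜ α * ((epsIJ X I {i}) ^ 2 * ∑ τJ, cmarg X α τJ * (g τJ) ^ 2) :=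
        mul_le_mul_of_nonneg_left
          (mul_le_mul_of_nonneg_right hεsq hBnonneg) (le_of_lt hα)
    _ = (epsIJ X I {i}) ^ 2 * ∑ ω, ind (restr (I ∪ {i})ᶜ ω = α) (X.π ω * (u ω) ^ 2) := by
        rw [tr_R, mul_left_comm]
        congr 1
        rw [Finset.mul_sum]
        exact Finset.sum_congr rfl fun τJ _ => (hconv {i} τJ _).symm

end AuxStar

section AuxStar2

variable (X : WPC n U)

lemma din_sub_left (f g h : (∀ i, U i) → ℝ) :
    din X (f - g) h = din X f h - din X g h := by
  unfold din
  rw [← Finset.sum_sub_distrib]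
  exact Finset.sum_congr rfl fun ω _ => by simp only [Pi.sub_apply]; ring

lemma din_expand_add (f g : (∀ i, U i) → ℝ) :
    din X (f + g) (f + g) = din X f f + 2 * din X f g + din X g g := by
  rw [din_add_left, din_add_right, din_add_right, din_comm X g f]
  ring

lemma star (X : WPC n U) {I : Finset (Fin n)} {i : Fin n} (hi : i ∉ I)
    {u : (∀ i, U i) → ℝ} (hu : Wdep I u)
    (hperp : ∀ w, Wdep (I ∪ {i}) w → din X u w = 0) :
    din X (opT X {i} u) (opT X {i} u) ≤ (epsIJ X I {i}) ^ 2 * din X u u := by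
  have hdsq : ∀ v : (∀ i, U i) → ℝ, din X v v
      = ∑ α : PAssign U (I ∪ {i})ᶜ, ∑ ω, ind (restr (I ∪ {i})ᶜ ω = α) (X.π ω * (v ω) ^ 2) := by
    intro v
    rw [show din X v v = ∑ ω, X.π ω * (v ω) ^ 2 from
      Finset.sum_congr rfl fun ω _ => by ring]
    exact sum_fiber _ _
  rw [hdsq, hdsq, Finset.mul_sum]
  apply Finset.sum_le_sum
  intro α _
  by_cases hα : 0 < marg X (I ∪ {i})ᶜ α
  · have hw : Wdep (I ∪ {i}) (fun ω => ind (restr (I ∪ {i})ᶜ ω = α) 1) := by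
      intro ω ω' h
      simp only []
      rw [h]
    have hmean := hperp _ hw
    rw [show din X u (fun ω => ind (restr (I ∪ {i})ᶜ ω = α) 1)
        = ∑ ω, ind (restr (I ∪ {i})ᶜ ω = α) (X.π ω * u ω) from
      Finset.sum_congr rfl fun ω _ => by
        show X.π ω * u ω * ind (restr (I ∪ {i})ᶜ ω = α) 1 = _
        rw [ind_mul_left, mul_one]] at hmean
    exact star_block X hi hu α hα hmean
  · have hm0 : marg X (I ∪ {i})ᶜ α = 0 :=
      le_antisymm (not_lt.mp hα) (marg_nonneg X _ α)
    have hzero : ∀ v : (∀ i, U i) → ℝ,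
        ∑ ω, ind (restr (I ∪ {i})ᶜ ω = α) (X.π ω * v ω) = 0 := by
      intro v
      apply Finset.sum_eq_zero
      intro ω _
      by_cases hω : restr (I ∪ {i})ᶜ ω = α
      · rw [ind_pos hω, pi_zero_of_pr hm0 hω, zero_mul]
      · rw [ind_neg hω]
    rw [hzero (fun ω => (opT X {i} u ω) ^ 2), hzero (fun ω => (u ω) ^ 2), mul_zero]

end AuxStar2

/-! ### The sweep operator and prefix sets -/

/-- Prefix of the sweep: `Rop X s m = Q_{s 0} ∘ ⋯ ∘ Q_{s (m-1)}`. -/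
def Rop (X : WPC n U) (s : Equiv.Perm (Fin n)) :
    ℕ → ((∀ i, U i) → ℝ) → ((∀ i, U i) → ℝ)
  | 0 => fun f => f
  | m + 1 => fun f => if h : m < n then Rop X s m (opT X {s ⟨m, h⟩} f) else Rop X s m f

/-- The image under `s` of the first `m` indices. -/
def Kset (s : Equiv.Perm (Fin n)) (m : ℕ) : Finset (Fin n) :=
  (Finset.univ.filter fun k : Fin n => (k : ℕ) < m).image s

section AuxRop

variable (X : WPC n U) (s : Equiv.Perm (Fin n))

lemma Kset_mono {m m' : ℕ} (h : m ≤ m') : Kset s m ⊆ Kset s m' :=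
  Finset.image_subset_image (fun k hk => by
    simp only [Finset.mem_filter, Finset.mem_univ, true_and] at hk ⊢
    omega)

lemma Kset_succ {m : ℕ} (h : m < n) :
    Kset s (m + 1) = Kset s m ∪ {s ⟨m, h⟩} := by
  ext x
  simp only [Kset, Finset.mem_image, Finset.mem_filter, Finset.mem_univ, true_and,
    Finset.mem_union, Finset.mem_singleton]
  constructor
  · rintro ⟨k, hk, rfl⟩
    rcases Nat.lt_succ_iff_lt_or_eq.mp hk with h' | h'
    · exact Or.inl ⟨k, h', rfl⟩
    · right
      congr 1
      exact Fin.ext h'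
  · rintro (⟨k, hk, rfl⟩ | rfl)
    · exact ⟨k, Nat.lt_succ_of_lt hk, rfl⟩
    · exact ⟨⟨m, h⟩, Nat.lt_succ_self m, rfl⟩

lemma Kset_not_mem {m : ℕ} (h : m < n) : s ⟨m, h⟩ ∉ Kset s m := by
  intro hmem
  simp only [Kset, Finset.mem_image, Finset.mem_filter, Finset.mem_univ, true_and] at hmem
  obtain ⟨k, hk, hsk⟩ := hmem
  have : k = ⟨m, h⟩ := s.injective hsk
  rw [this] at hk
  exact lt_irrefl m hk

lemma Kset_univ : Kset s n = Finset.univ := by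
  ext x
  simp only [Kset, Finset.mem_image, Finset.mem_filter, Finset.mem_univ, true_and,
    iff_true]
  exact ⟨s.symm x, (s.symm x).isLt, s.apply_symm_apply x⟩

lemma Rop_add (m : ℕ) (f g : (∀ i, U i) → ℝ) :
    Rop X s m (f + g) = Rop X s m f + Rop X s m g := by
  induction m generalizing f g with
  | zero => rfl
  | succ m ih =>
      show Rop X s (m+1) (f+g) = _
      unfold Rop
      split
      · rw [opT_add]
        exact ih _ _
      · exact ih _ _

lemma Rop_congr (m : ℕ) {f g : (∀ i, U i) → ℝ} (h : aeq X f g) :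
    aeq X (Rop X s m f) (Rop X s m g) := by
  induction m generalizing f g with
  | zero => exact h
  | succ m ih =>
      unfold Rop
      split
      · next h' =>
          rw [opT_congr X {s ⟨m, h'⟩} h]
          exact fun ω _ => rfl
      · exact ih h

lemma Rop_fix (m : ℕ) (hm : m ≤ n) {f : (∀ i, U i) → ℝ}
    (hf : Wdep (Kset s m) f) : aeq X (Rop X s m f) f := by
  induction m with
  | zero => exact fun ω _ => rfl
  | succ m ih =>
      have h' : m < n := hm
      have hfm : Wdep (Kset s m) f := Wdep_mono (Kset_mono s (Nat.le_succ m)) hf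
      have hf1 : Wdep {s ⟨m, h'⟩} f := by
        apply Wdep_mono _ hf
        rw [Kset_succ s h']
        exact Finset.subset_union_right
      unfold Rop
      rw [dif_pos h']
      have e1 : aeq X (opT X {s ⟨m, h'⟩} f) f := opT_fix X _ hf1
      have e2 := Rop_congr X s m e1
      have e3 := ih (le_of_lt h') hfm
      exact fun ω hω => (e2 ω hω).trans (e3 ω hω)

lemma Rop_perp (m : ℕ) (hm : m ≤ n) (T : Finset (Fin n)) (hT : Kset s m ⊆ T)
    {z : (∀ i, U i) → ℝ} (hz : ∀ w, Wdep T w → din X z w = 0) :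
    ∀ w, Wdep T w → din X (Rop X s m z) w = 0 := by
  induction m generalizing z with
  | zero => exact hz
  | succ m ih =>
      have h' : m < n := hm
      unfold Rop
      rw [dif_pos h']
      apply ih (le_of_lt h') (subset_trans (Kset_mono s (Nat.le_succ m)) hT)
      intro w hw
      have hsw : s ⟨m, h'⟩ ∈ T := by
        apply hT
        rw [Kset_succ s h']
        exact Finset.mem_union_right _ (Finset.mem_singleton_self _)
      have hw1 : Wdep {s ⟨m, h'⟩} w :=
        Wdep_mono (Finset.singleton_subset_iff.mpr hsw) hw
      rw [din_opT, din_congr_right X z (opT_fix X _ hw1)]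
      exact hz w hw

end AuxRop

section MainInd

variable (X : WPC n U) (s : Equiv.Perm (Fin n))

lemma din_sub_right (f g h : (∀ i, U i) → ℝ) :
    din X f (g - h) = din X f g - din X f h := by
  rw [din_comm, din_sub_left, din_comm X g f, din_comm X h f]

lemma main_ind : ∀ m : ℕ, 1 ≤ m → m ≤ n → ∀ g : (∀ i, U i) → ℝ,
    (∀ w, Wdep (Kset s m) w → din X g w = 0) →
    din X (Rop X s m g) (Rop X s m g) ≤
      (1 - ∏ j ∈ Finset.univ.filter (fun j : Fin n => 0 < (j : ℕ) ∧ (j : ℕ) < m),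
        (1 - epsIJ X (Kset s (j : ℕ)) {s j} ^ 2)) * din X g g := by
  intro m
  induction m with
  | zero => exact fun h => absurd h (by omega)
  | succ m ih =>
    intro _ hm2 g hg
    have h' : m < n := hm2
    rcases Nat.eq_zero_or_pos m with rfl | hm1
    · -- base case m + 1 = 1
      have h0 : 0 < n := h'
      have hfilter : Finset.univ.filter
          (fun j : Fin n => 0 < (j : ℕ) ∧ (j : ℕ) < 0 + 1) = ∅ := by
        apply Finset.filter_eq_empty_iff.mpr
        intro j _
        omega
      rw [hfilter, Finset.prod_empty, sub_self, zero_mul]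
      have hK1 : Kset s 1 = {s ⟨0, h0⟩} := by
        rw [show (1 : ℕ) = 0 + 1 from rfl, Kset_succ s h0]
        have hK0 : Kset s 0 = ∅ := by
          ext x
          simp [Kset]
        rw [hK0, Finset.empty_union]
      have hRop1 : Rop X s (0 + 1) g = opT X {s ⟨0, h0⟩} g := by
        show (if h : 0 < n then Rop X s 0 (opT X {s ⟨0, h⟩} g) else Rop X s 0 g) = _
        rw [dif_pos h0]
        rfl
      rw [hRop1]
      have e1 : din X (opT X {s ⟨0, h0⟩} g) (opT X {s ⟨0, h0⟩} g) = 0 := by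
        rw [din_opT, din_congr_right X g (opT_fix X _ (opT_mem X _ g))]
        apply hg
        rw [show (0 + 1 : ℕ) = 1 from rfl, hK1]
        exact opT_mem X _ g
      exact le_of_eq e1
    · -- inductive step, m ≥ 1
      have hmn : m ≤ n := le_of_lt h'
      have hK1 : Kset s m ⊆ Kset s (m + 1) := Kset_mono s (Nat.le_succ m)
      have hiK : s ⟨m, h'⟩ ∉ Kset s m := Kset_not_mem s h'
      have hKu : Kset s (m + 1) = Kset s m ∪ {s ⟨m, h'⟩} := Kset_succ s h'
      obtain ⟨y, hy⟩ : ∃ y, y = opT X {s ⟨m, h'⟩} g := ⟨_, rfl⟩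
      obtain ⟨u, hudef⟩ : ∃ u, u = opT X (Kset s m) y := ⟨_, rfl⟩
      obtain ⟨z, hzdef⟩ : ∃ z, z = y - u := ⟨_, rfl⟩
      obtain ⟨q, hq⟩ : ∃ q, q = ∏ j ∈ Finset.univ.filter
          (fun j : Fin n => 0 < (j : ℕ) ∧ (j : ℕ) < m),
          (1 - epsIJ X (Kset s (j : ℕ)) {s j} ^ 2) := ⟨_, rfl⟩
      have humem : Wdep (Kset s m) u := hudef ▸ opT_mem X _ y
      have hB : ∀ w, Wdep (Kset s m) w → din X u w = din X y w := by
        intro w hw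
        rw [hudef, din_opT, din_congr_right X y (opT_fix X _ hw)]
      have hC : ∀ w, Wdep (Kset s m) w → din X z w = 0 := by
        intro w hw
        rw [hzdef, din_sub_left, hB w hw, sub_self]
      have hyg : ∀ w, Wdep (Kset s (m + 1)) w → din X y w = din X g w := by
        intro w hw
        have hw1 : Wdep {s ⟨m, h'⟩} w := by
          apply Wdep_mono _ hw
          rw [hKu]
          exact Finset.subset_union_right
        rw [hy, din_opT, din_congr_right X g (opT_fix X _ hw1)]
      have hE : ∀ w, Wdep (Kset s (m + 1)) w → din X u w = 0 := by
        intro w hw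
        rw [hB w (Wdep_mono hK1 hw), hyg w hw]
        exact hg w hw
      have hD : din X u u = din X u y := by
        rw [hudef, din_opT, din_congr_right X y (opT_fix X _ (opT_mem X _ y)), ← hudef]
        exact din_comm X y u
      have hG : din X u u ≤ (epsIJ X (Kset s m) {s ⟨m, h'⟩}) ^ 2 * din X g g := by
        have hQug : din X (opT X {s ⟨m, h'⟩} u) g = din X u y := by
          rw [din_opT, ← hy]
        have hstar := star X hiK humem (fun w hw => hE w (by rw [hKu]; exact hw))
        have hchain : (din X u u) ^ 2
            ≤ (epsIJ X (Kset s m) {s ⟨m, h'⟩}) ^ 2 * din X u u * din X g g := by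
          calc (din X u u) ^ 2 = (din X (opT X {s ⟨m, h'⟩} u) g) ^ 2 := by rw [hQug, ← hD]
            _ ≤ din X (opT X {s ⟨m, h'⟩} u) (opT X {s ⟨m, h'⟩} u) * din X g g := din_cs X _ g
            _ ≤ ((epsIJ X (Kset s m) {s ⟨m, h'⟩}) ^ 2 * din X u u) * din X g g :=
                mul_le_mul_of_nonneg_right hstar (din_self_nonneg X g)
            _ = (epsIJ X (Kset s m) {s ⟨m, h'⟩}) ^ 2 * din X u u * din X g g := by ring
        rcases eq_or_lt_of_le (din_self_nonneg X u) with h0 | hpos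
        · rw [← h0]
          exact mul_nonneg (sq_nonneg _) (din_self_nonneg X g)
        · apply le_of_mul_le_mul_right _ hpos
          calc din X u u * din X u u = (din X u u) ^ 2 := (pow_two _).symm
            _ ≤ (epsIJ X (Kset s m) {s ⟨m, h'⟩}) ^ 2 * din X u u * din X g g := hchain
            _ = (epsIJ X (Kset s m) {s ⟨m, h'⟩}) ^ 2 * din X g g * din X u u := by ring
      have hH : din X y y ≤ din X g g := hy ▸ opT_contract X _ g
      have hNz : din X z z = din X y y - din X u u := by
        rw [hzdef, din_sub_left, din_sub_right, din_sub_right, din_comm X y u, ← hD]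
        ring
      have hRsucc : Rop X s (m + 1) g = Rop X s m y := by
        show (if h : m < n then Rop X s m (opT X {s ⟨m, h⟩} g) else Rop X s m g) = _
        rw [dif_pos h', ← hy]
      have hdecomp : Rop X s (m + 1) g = Rop X s m u + Rop X s m z := by
        rw [hRsucc, show y = u + z from by
          rw [hzdef]
          funext ω
          simp only [Pi.add_apply, Pi.sub_apply]
          ring]
        exact Rop_add X s m u z
      have hRu : aeq X (Rop X s m u) u := Rop_fix X s m hmn humem
      have hcross : din X (Rop X s m u) (Rop X s m z) = 0 := by
        rw [din_congr_left X hRu, din_comm]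
        exact Rop_perp X s m hmn (Kset s m) subset_rfl hC u humem
      have hRuu : din X (Rop X s m u) (Rop X s m u) = din X u u := by
        rw [din_congr_left X hRu, din_congr_right X u hRu]
      have hIH : din X (Rop X s m z) (Rop X s m z) ≤ (1 - q) * din X z z := by
        rw [hq]
        exact ih hm1 hmn z hC
      have hq0 : 0 ≤ q := by
        rw [hq]
        apply Finset.prod_nonneg
        intro j _
        have h1 := epsIJ_nonneg X (Kset s (j : ℕ)) {s j}
        have h2 := epsIJ_le_one X (Kset s (j : ℕ)) {s j}
        nlinarith
      have hq1 : q ≤ 1 := by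
        rw [hq]
        apply Finset.prod_le_one
        · intro j _
          have h1 := epsIJ_nonneg X (Kset s (j : ℕ)) {s j}
          have h2 := epsIJ_le_one X (Kset s (j : ℕ)) {s j}
          nlinarith
        · intro j _
          nlinarith [sq_nonneg (epsIJ X (Kset s (j : ℕ)) {s j})]
      have hnotin : (⟨m, h'⟩ : Fin n) ∉ Finset.univ.filter
          (fun j : Fin n => 0 < (j : ℕ) ∧ (j : ℕ) < m) := by
        simp only [Finset.mem_filter, Finset.mem_univ, true_and]
        omega
      have hset : Finset.univ.filter (fun j : Fin n => 0 < (j : ℕ) ∧ (j : ℕ) < m + 1)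
          = insert (⟨m, h'⟩ : Fin n)
            (Finset.univ.filter (fun j : Fin n => 0 < (j : ℕ) ∧ (j : ℕ) < m)) := by
        ext j
        simp only [Finset.mem_filter, Finset.mem_univ, true_and, Finset.mem_insert,
          Fin.ext_iff]
        omega
      have hprod : (∏ j ∈ Finset.univ.filter
            (fun j : Fin n => 0 < (j : ℕ) ∧ (j : ℕ) < m + 1),
            (1 - epsIJ X (Kset s (j : ℕ)) {s j} ^ 2))
          = (1 - epsIJ X (Kset s m) {s ⟨m, h'⟩} ^ 2) * q := by
        rw [hset, Finset.prod_insert hnotin, hq]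
      calc din X (Rop X s (m + 1) g) (Rop X s (m + 1) g)
          = din X u u + 2 * din X (Rop X s m u) (Rop X s m z)
              + din X (Rop X s m z) (Rop X s m z) := by
            rw [hdecomp, din_expand_add, hRuu]
        _ = din X u u + din X (Rop X s m z) (Rop X s m z) := by rw [hcross]; ring
        _ ≤ din X u u + (1 - q) * din X z z := by linarith [hIH]
        _ = q * din X u u + (1 - q) * din X y y := by rw [hNz]; ring
        _ ≤ q * ((epsIJ X (Kset s m) {s ⟨m, h'⟩}) ^ 2 * din X g g)
              + (1 - q) * din X g g := by
            have t1 := mul_le_mul_of_nonneg_left hG hq0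
            have t2 := mul_le_mul_of_nonneg_left hH (sub_nonneg.mpr hq1)
            linarith
        _ = (1 - (1 - epsIJ X (Kset s m) {s ⟨m, h'⟩} ^ 2) * q) * din X g g := by ring
        _ = (1 - ∏ j ∈ Finset.univ.filter
              (fun j : Fin n => 0 < (j : ℕ) ∧ (j : ℕ) < m + 1),
              (1 - epsIJ X (Kset s (j : ℕ)) {s j} ^ 2)) * din X g g := by
            rw [hprod]

end MainInd

/-! ### Final assembly -/

lemma sigma2_nonneg_of_bdd {A B : Type*} [Fintype A] [Fintype B]
    {μA : A → ℝ} {μB : B → ℝ} {M : A → B → ℝ}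
    (hbdd : BddAbove (s2set μA μB M)) : 0 ≤ sigma2 μA μB M := by
  rw [sigma2_eq_sSup]
  rcases Set.eq_empty_or_nonempty (s2set μA μB M) with he | ⟨r, hr⟩
  · rw [he, Real.sSup_empty]
  · obtain ⟨f, g, h1, h2, h3, h4, h5⟩ := hr
    have hmem : r ∈ s2set μA μB M := ⟨f, g, h1, h2, h3, h4, h5⟩
    have hneg : -r ∈ s2set μA μB M := by
      refine ⟨fun a => -(f a), g, ?_, h2, ?_, h4, ?_⟩
      · rw [show (∑ a, μA a * -f a) = -∑ a, μA a * f a from by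
          rw [← Finset.sum_neg_distrib]; exact Finset.sum_congr rfl fun a _ => by ring, h1,
          neg_zero]
      · rw [show (∑ a, μA a * (-f a) ^ 2) = ∑ a, μA a * f a ^ 2 from
          Finset.sum_congr rfl fun a _ => by ring]
        exact h3
      · rw [show (∑ a, μA a * -f a * ∑ b, M a b * g b)
            = -∑ a, μA a * f a * ∑ b, M a b * g b from by
          rw [← Finset.sum_neg_distrib]; exact Finset.sum_congr rfl fun a _ => by ring, ← h5]
    have hr' := le_csSup hbdd hmem
    have hn' := le_csSup hbdd hneg
    linarith

section Final

variable (X : WPC n U) (s : Equiv.Perm (Fin n))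

lemma pr_single (P : (∀ i, U i) → Prop) (ω' : ∀ i, U i) :
    pr X (fun τ => τ = ω' ∧ P τ) = ind (P ω') (X.π ω') := by
  rw [pr_eq]
  rw [Fintype.sum_eq_single ω' (fun b hb => ind_neg (fun h => hb h.1) _)]
  exact ind_congr (and_iff_right rfl) _

lemma Qmat_mulVec (i : Fin n) (g : (∀ i, U i) → ℝ) :
    (Qmat X i).mulVec g = opT X {i} g := by
  funext ω
  show ∑ ω', Qmat X i ω ω' * g ω' = _
  unfold opT
  rw [Finset.sum_div]
  apply Finset.sum_congr rfl
  intro ω' _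
  rw [show Qmat X i ω ω' = pr X (fun τ => τ = ω' ∧ restr {i}ᶜ τ = restr {i}ᶜ ω) /
      pr X (fun τ => restr {i}ᶜ τ = restr {i}ᶜ ω) from rfl]
  rw [pr_single X (fun τ => restr {i}ᶜ τ = restr {i}ᶜ ω) ω']
  rw [ind_div, ind_mul_right, ind_div]
  exact congrArg (ind _) (by ring)

lemma listfn : ∀ (m : ℕ) (hm : m ≤ n) (g : (∀ i, U i) → ℝ),
    ((List.ofFn fun j : Fin m => Qmat X (s (Fin.castLE hm j))).prod).mulVec g
      = Rop X s m g := by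
  intro m
  induction m with
  | zero =>
      intro hm g
      rw [List.ofFn_zero, List.prod_nil, Matrix.one_mulVec]
      rfl
  | succ m ihm =>
      intro hm g
      rw [List.ofFn_succ', List.prod_concat, ← Matrix.mulVec_mulVec, Qmat_mulVec]
      have hstep : Rop X s (m + 1) g = Rop X s m (opT X {s ⟨m, hm⟩} g) := by
        show (if h : m < n then Rop X s m (opT X {s ⟨m, h⟩} g) else Rop X s m g) = _
        rw [dif_pos (show m < n from hm)]
      rw [hstep]
      exact ihm (le_of_lt hm) _

lemma Psq_mulVec (g : (∀ i, U i) → ℝ) : (Psq X s).mulVec g = Rop X s n g :=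
  listfn X s n le_rfl g

end Final

theorem seq_sweep_sigma2_bound
    (X : WPC n U) (hconn : linkConnected X) (s : Equiv.Perm (Fin n)) :
    sigma2P X s ^ 2 ≤
      1 - ∏ j ∈ Finset.univ.filter (fun j : Fin n => 0 < (j : ℕ)),
        (1 - epsIJ X ((Finset.univ.filter fun k : Fin n => k < j).image fun k => s k) {s j} ^ 2) ∧
    1 - sigma2P X s ≥
      1 - Real.sqrt (1 - ∏ j ∈ Finset.univ.filter (fun j : Fin n => 0 < (j : ℕ)),
        (1 - epsIJ X ((Finset.univ.filter fun k : Fin n => k < j).image fun k => s k) {s j} ^ 2)) := by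
  have hsig : sigma2P X s = sSup (s2set X.π X.π (fun ω ω' => Psq X s ω ω')) := rfl
  rcases Nat.eq_zero_or_pos n with hn0 | hn
  · -- degenerate case n = 0
    subst hn0
    have hempty : (Finset.univ : Finset (Fin 0)).filter (fun j : Fin 0 => 0 < (j : ℕ)) = ∅ := by
      simp
    rw [hempty, Finset.prod_empty, sub_self, Real.sqrt_zero]
    haveI : Unique (∀ i : Fin 0, U i) :=
      ⟨⟨fun i => i.elim0⟩, fun ω => funext fun i => i.elim0⟩
    have hσ : sigma2P X s = 0 := by
      rw [hsig, show s2set X.π X.π (fun ω ω' => Psq X s ω ω') = (∅ : Set ℝ) from ?_,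
        Real.sSup_empty]
      rw [Set.eq_empty_iff_forall_notMem]
      rintro r ⟨f, g, h1, h2, h3, h4, h5⟩
      have hπ1 : X.π default = 1 := by
        have := X.sum_one
        rwa [Fintype.sum_unique] at this
      rw [Fintype.sum_unique, hπ1, one_mul] at h1 h3
      rw [h1] at h3
      norm_num at h3
    rw [hσ]
    norm_num
  · -- main case n ≥ 1
    obtain ⟨P', hP'⟩ : ∃ P', P' = ∏ j ∈ Finset.univ.filter
        (fun j : Fin n => 0 < (j : ℕ) ∧ (j : ℕ) < n),
        (1 - epsIJ X (Kset s (j : ℕ)) {s j} ^ 2) := ⟨_, rfl⟩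
    have hPP : (∏ j ∈ Finset.univ.filter (fun j : Fin n => 0 < (j : ℕ)),
        (1 - epsIJ X ((Finset.univ.filter fun k : Fin n => k < j).image fun k => s k)
          {s j} ^ 2)) = P' := by
      rw [hP']
      apply Finset.prod_congr
      · ext j
        simp only [Finset.mem_filter, Finset.mem_univ, true_and]
        exact ⟨fun h => ⟨h, j.isLt⟩, fun h => h.1⟩
      · intro j _
        have hIK : (Finset.univ.filter fun k : Fin n => k < j).image (fun k => s k)
            = Kset s (j : ℕ) := by
          unfold Kset
          apply congrArg
          ext k
          simp only [Finset.mem_filter, Finset.mem_univ, true_and]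
          exact Iff.rfl
        rw [hIK]
    have hP'le : P' ≤ 1 := by
      rw [hP']
      apply Finset.prod_le_one
      · intro j _
        have h1 := epsIJ_nonneg X (Kset s (j : ℕ)) {s j}
        have h2 := epsIJ_le_one X (Kset s (j : ℕ)) {s j}
        nlinarith
      · intro j _
        nlinarith [sq_nonneg (epsIJ X (Kset s (j : ℕ)) {s j})]
    have hB0 : 0 ≤ 1 - P' := by linarith
    have helem : ∀ r ∈ s2set X.π X.π (fun ω ω' => Psq X s ω ω'), r ≤ Real.sqrt (1 - P') := by
      rintro r ⟨f, g, h1, h2, h3, h4, rfl⟩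
      have hfd : din X f f = 1 := by
        rw [show din X f f = ∑ a, X.π a * f a ^ 2 from
          Finset.sum_congr rfl fun a _ => by ring]
        exact h3
      have hgd : din X g g = 1 := by
        rw [show din X g g = ∑ b, X.π b * g b ^ 2 from
          Finset.sum_congr rfl fun b _ => by ring]
        exact h4
      have hdom : ((Kset s n)ᶜ : Finset (Fin n)) = ∅ := by
        rw [Kset_univ]
        exact Finset.compl_univ
      obtain ⟨ω₀, -⟩ := X.nonempty
      have hgperp : ∀ w, Wdep (Kset s n) w → din X g w = 0 := by
        intro w hw
        have hconst : ∀ ω, w ω = w ω₀ := by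
          intro ω
          apply hw
          funext k
          exact absurd k.2 (Finset.eq_empty_iff_forall_notMem.mp hdom (k : Fin n))
        rw [show din X g w = (∑ b, X.π b * g b) * w ω₀ from by
          rw [Finset.sum_mul]
          exact Finset.sum_congr rfl fun ω _ => by rw [hconst ω], h2, zero_mul]
      have hmain := main_ind X s n hn le_rfl g hgperp
      have hr : (∑ a, X.π a * f a * ∑ b, Psq X s a b * g b) = din X f (Rop X s n g) := by
        apply Finset.sum_congr rfl
        intro a _
        congr 1
        exact congrFun (Psq_mulVec X s g) a
      rw [hr]
      have h2' : (din X f (Rop X s n g)) ^ 2 ≤ 1 - P' := by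
        calc (din X f (Rop X s n g)) ^ 2
            ≤ din X f f * din X (Rop X s n g) (Rop X s n g) := din_cs X _ _
          _ = din X (Rop X s n g) (Rop X s n g) := by rw [hfd, one_mul]
          _ ≤ (1 - P') * din X g g := by rw [hP']; exact hmain
          _ = 1 - P' := by rw [hgd, mul_one]
      calc din X f (Rop X s n g) ≤ |din X f (Rop X s n g)| := le_abs_self _
        _ = Real.sqrt ((din X f (Rop X s n g)) ^ 2) := (Real.sqrt_sq_eq_abs _).symm
        _ ≤ Real.sqrt (1 - P') := Real.sqrt_le_sqrt h2'
    have hkey : sigma2P X s ≤ Real.sqrt (1 - P') := by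
      rw [hsig]
      exact Real.sSup_le helem (Real.sqrt_nonneg _)
    have hs0 : 0 ≤ sigma2P X s := by
      rw [hsig]
      exact sigma2_nonneg_of_bdd ⟨Real.sqrt (1 - P'), helem⟩
    constructor
    · rw [hPP]
      calc sigma2P X s ^ 2 ≤ (Real.sqrt (1 - P')) ^ 2 := pow_le_pow_left₀ hs0 hkey 2
        _ = 1 - P' := Real.sq_sqrt hB0
    · rw [hPP]
      linarith [hkey]

end PaperFormal
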